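/- Let u_i = n − dim_F(C_i) for 0 ≤ i ≤ t (so u_t = n), and suppose each C_i is systematic on its first n − u_i coordinates, i.e., the projection of C_i onto the coordinates {0,…,n−u_i−1} is a bijection from C_i onto F^{n−u_i}. Call a position (j,k) (row j, column k) a data position if, letting i be the unique index with s_0+⋯+s_{i−1} ≤ j < s_0+⋯+s_i, one has 0 ≤ k ≤ n−u_i−1. Then for every assignment of values in F to the data positions there is exactly one codeword c of the EII code C that agrees with the given assignment at all data positions; in particular the number of data positions is m·n − Σ_{i=0}^{t} s_i·u_i. -/

import Mathlib

section Aux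

variable {F V : Type*} [Field F] [AddCommGroup V] [Module F V]
variable {ι : Type*} [Fintype ι] [DecidableEq ι]

lemma aux_sum_inv_smul (M : Matrix ι ι F) (hM : IsUnit M.det) (v : ι → V) (q : ι) :
    ∑ r, M⁻¹ q r • (∑ p, M r p • v p) = v q := by
  simp_rw [Finset.smul_sum, smul_smul]
  rw [Finset.sum_comm]
  simp_rw [← Finset.sum_smul, ← Matrix.mul_apply, Matrix.nonsing_inv_mul M hM, Matrix.one_apply]
  simp

lemma aux_mem_of_sum_mem (M : Matrix ι ι F) (hM : IsUnit M.det) (v : ι → V)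
    (W : Submodule F V) (h : ∀ r, (∑ p, M r p • v p) ∈ W) (q : ι) : v q ∈ W := by
  rw [← aux_sum_inv_smul M hM v q]
  exact Submodule.sum_mem _ fun r _ => Submodule.smul_mem _ _ (h r)

lemma aux_det_pow (N : ℕ) (w : Fin N → F) (hw : Function.Injective w) :
    IsUnit (Matrix.of fun r q : Fin N => w q ^ (r : ℕ)).det := by
  have h : (Matrix.of fun r q : Fin N => w q ^ (r : ℕ)) = (Matrix.vandermonde w).transpose := rfl
  rw [h, Matrix.det_transpose]
  exact (Matrix.det_vandermonde_ne_zero_iff.mpr hw).isUnit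

/-- The full `m × m` "DFT-like" matrix with entries `α ^ (r * j)`. -/
def vmatAux (m : ℕ) (α : F) : Matrix (Fin m) (Fin m) F :=
  Matrix.of fun r j => α ^ ((r : ℕ) * (j : ℕ))

/-- The linear transform sending `c` to the sequence of "syndromes"
`r ↦ ∑ j, α ^ (r j) • c j`. -/
def tlinAux (m n : ℕ) (α : F) : (Fin m → Fin n → F) →ₗ[F] (Fin m → Fin n → F) where
  toFun c := fun r => ∑ j : Fin m, α ^ ((r : ℕ) * (j : ℕ)) • c j
  map_add' c d := by
    funext r
    simp [smul_add, Finset.sum_add_distrib]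
  map_smul' x c := by
    funext r
    simp [Finset.smul_sum, smul_smul, mul_comm]

lemma tlinAux_apply (m n : ℕ) (α : F) (c : Fin m → Fin n → F) (r : Fin m) :
    tlinAux m n α c r = ∑ j : Fin m, α ^ ((r : ℕ) * (j : ℕ)) • c j := rfl

end Aux

/-- systematic encoding of EII codes.

Same EII context, with `u i = n - dim C i` (so `u t = n`).  Each `C i` is assumed
systematic on its first `n - u i` coordinates: for every target vector of values on
those coordinates there is exactly one codeword of `C i` matching it.  `idx j` is the
unique level of row `j`, i.e. `s 0 + ⋯ + s (idx j - 1) ≤ j < s 0 + ⋯ + s (idx j)`;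
a position `(j, k)` is a data position when `k < n - u (idx j)`.

Claim: every assignment of values to the data positions extends to exactly one codeword
of the EII code, and the number of data positions is `m·n - ∑_{i=0}^t s i · u i`. -/
theorem stmt_3
    {F : Type*} [Field F] [Fintype F] [DecidableEq F]
    (n t : ℕ) (hn : 1 ≤ n) (ht : 1 ≤ t)
    (C : ℕ → Submodule F (Fin n → F))
    (hCt : C t = ⊥)
    (hnest : ∀ i, i < t → C (i + 1) < C i)
    (s : ℕ → ℕ) (m : ℕ)
    (hm : m = ∑ i ∈ Finset.range (t + 1), s i) (hm1 : 1 ≤ m)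
    (α : F) (hα : m ≤ orderOf α)
    (shat : ℕ → ℕ) (hshat : ∀ i, shat i = ∑ j ∈ Finset.Icc i t, s j)
    (u : ℕ → ℕ) (hu : ∀ i ≤ t, u i = n - Module.finrank F (C i))
    (hsys : ∀ i ≤ t, ∀ y : Fin n → F,
      ∃! x : Fin n → F, x ∈ C i ∧ ∀ k : Fin n, (k : ℕ) < n - u i → x k = y k)
    (idx : Fin m → ℕ)
    (hidx : ∀ j : Fin m, idx j ≤ t ∧
      (∑ i ∈ Finset.range (idx j), s i) ≤ (j : ℕ) ∧
      (j : ℕ) < ∑ i ∈ Finset.range (idx j + 1), s i) :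
    (∀ a : Fin m → Fin n → F,
      ∃! c : Fin m → Fin n → F,
        ((∀ j, c j ∈ C 0) ∧ ∀ i, 1 ≤ i → i ≤ t → ∀ r, r < shat i →
            (∑ j : Fin m, α ^ (r * (j : ℕ)) • c j) ∈ C i) ∧
        ∀ (j : Fin m) (k : Fin n), (k : ℕ) < n - u (idx j) → c j k = a j k) ∧
    (∑ j : Fin m, (n - u (idx j)) = m * n - ∑ i ∈ Finset.range (t + 1), s i * u i) := by
  classical
  -- partial sums of the s i
  set B : ℕ → ℕ := fun i => ∑ k ∈ Finset.range i, s k with hBdef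
  have hBmono : ∀ {i k : ℕ}, i ≤ k → B i ≤ B k := by
    intro i k hik
    exact Finset.sum_le_sum_of_subset (Finset.range_subset_range.mpr hik)
  have hBsucc : ∀ i, B (i + 1) = B i + s i := by
    intro i; simp [hBdef, Finset.sum_range_succ]
  have hBshat : ∀ i, i ≤ t + 1 → B i + shat i = m := by
    intro i hi
    rw [hshat, hm, hBdef]
    simp only []
    rw [Finset.range_eq_Ico, ← Finset.Ico_add_one_right_eq_Icc, Finset.range_eq_Ico]
    exact Finset.sum_Ico_consecutive s (Nat.zero_le i) hi
  -- nesting of the codes as `≤`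
  have hCle0 : ∀ d i : ℕ, i + d ≤ t → C (i + d) ≤ C i := by
    intro d
    induction d with
    | zero => intro i _; exact le_rfl
    | succ d ih =>
      intro i h
      exact le_trans (hnest (i + d) (by omega)).le (ih i (by omega))
  have hCle : ∀ i k : ℕ, i ≤ k → k ≤ t → C k ≤ C i := by
    intro i k h1 h2
    have h3 : i + (k - i) = k := by omega
    rw [← h3]
    exact hCle0 (k - i) i (by omega)
  -- characterization of idx
  have hidx_iff : ∀ (j : Fin m) (i : ℕ), i ≤ idx j ↔ B i ≤ (j : ℕ) := by
    intro j i
    constructor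
    · intro h; exact le_trans (hBmono h) (hidx j).2.1
    · intro h
      by_contra hlt
      push_neg at hlt
      have h1 := (hidx j).2.2
      have h2 : B (idx j + 1) ≤ B i := hBmono hlt
      have h3 : (j : ℕ) < B (idx j + 1) := h1
      omega
  have hidx_val : ∀ (p : Fin m) (i : ℕ), B i ≤ (p : ℕ) → (p : ℕ) < B (i + 1) → idx p = i := by
    intro p i h1 h2
    have ha := (hidx_iff p i).mpr h1
    have hb : ¬ (i + 1 ≤ idx p) := by
      intro hh
      have := (hidx_iff p (i + 1)).mp hh
      omega
    omega
  -- u and finrank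
  have hut : ∀ i, i ≤ t → u i ≤ n := by
    intro i hi; rw [hu i hi]; exact Nat.sub_le n _
  have hfr : ∀ i, i ≤ t → Module.finrank F (C i) = n - u i := by
    intro i hi
    have hle : Module.finrank F (C i) ≤ n := by
      have h1 := Submodule.finrank_le (C i)
      rwa [Module.finrank_fin_fun] at h1
    rw [hu i hi]
    omega
  -- injectivity of powers of α
  have hαinj : ∀ {a b : ℕ}, a < m → b < m → α ^ a = α ^ b → a = b := by
    intro a b ha hb hab
    exact pow_injOn_Iio_orderOf (Set.mem_Iio.mpr (lt_of_lt_of_le ha hα))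
      (Set.mem_Iio.mpr (lt_of_lt_of_le hb hα)) hab
  -- Vandermonde-type matrices are invertible
  have hVdet : ∀ (N b : ℕ), b + N ≤ m →
      IsUnit (Matrix.of fun r q : Fin N => α ^ ((r : ℕ) * (b + (q : ℕ)))).det := by
    intro N b hbN
    have h : (Matrix.of fun r q : Fin N => α ^ ((r : ℕ) * (b + (q : ℕ))))
        = (Matrix.of fun r q : Fin N => (α ^ (b + (q : ℕ))) ^ (r : ℕ)) := by
      ext r q
      rw [Matrix.of_apply, Matrix.of_apply, ← pow_mul, mul_comm]
    rw [h]
    apply aux_det_pow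
    intro q q' hqq
    have hqN := q.isLt
    have hq'N := q'.isLt
    have hq : b + (q : ℕ) < m := by omega
    have hq' : b + (q' : ℕ) < m := by omega
    have := hαinj hq hq' hqq
    exact Fin.ext (by omega)
  have hVm : IsUnit (vmatAux m α).det := by
    have h0 := hVdet m 0 (by omega)
    have h : (Matrix.of fun r q : Fin m => α ^ ((r : ℕ) * (0 + (q : ℕ)))) = vmatAux m α := by
      ext r q; simp [vmatAux]
    rwa [h] at h0
  -- the transform and its inverse
  set T : (Fin m → Fin n → F) →ₗ[F] (Fin m → Fin n → F) := tlinAux m n α with hTdef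
  have hTapp : ∀ (c : Fin m → Fin n → F) (r : Fin m),
      T c r = ∑ j : Fin m, (vmatAux m α) r j • c j := by
    intro c r; rfl
  set S : (Fin m → Fin n → F) → (Fin m → Fin n → F) :=
    fun d j => ∑ r : Fin m, (vmatAux m α)⁻¹ j r • d r with hSdef
  have hST : ∀ c, S (T c) = c := by
    intro c
    funext j
    exact aux_sum_inv_smul (vmatAux m α) hVm c j
  have hTS : ∀ d, T (S d) = d := by
    intro d
    funext r
    have h1 : IsUnit ((vmatAux m α)⁻¹).det := Matrix.isUnit_nonsing_inv_det _ hVm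
    have h2 := aux_sum_inv_smul ((vmatAux m α)⁻¹) h1 d r
    rw [Matrix.nonsing_inv_nonsing_inv _ hVm] at h2
    rw [hTapp]
    exact h2
  -- the EII code as a submodule
  set idx' : Fin m → ℕ := fun r => idx r.rev with hidx'def
  set 𝒞 : Submodule F (Fin m → Fin n → F) :=
    Submodule.comap T (Submodule.pi Set.univ fun r => C (idx' r)) with h𝒞def
  have hmem𝒞 : ∀ c, c ∈ 𝒞 ↔ ∀ r : Fin m, T c r ∈ C (idx' r) := by
    intro c
    rw [h𝒞def, Submodule.mem_comap, Submodule.mem_pi]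
    exact ⟨fun h r => h r (Set.mem_univ r), fun h r _ => h r⟩
  have hrev_val : ∀ r : Fin m, ((r.rev : Fin m) : ℕ) = m - 1 - (r : ℕ) := by
    intro r
    rw [Fin.val_rev]
    omega
  -- characterization of the code
  have hchar : ∀ c : Fin m → Fin n → F, c ∈ 𝒞 ↔
      ((∀ j, c j ∈ C 0) ∧ ∀ i, 1 ≤ i → i ≤ t → ∀ r, r < shat i →
        (∑ j : Fin m, α ^ (r * (j : ℕ)) • c j) ∈ C i) := by
    intro c
    rw [hmem𝒞]
    constructor
    · intro hc
      constructor
      · intro j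
        have h1 := aux_sum_inv_smul (vmatAux m α) hVm c j
        rw [← h1]
        refine Submodule.sum_mem _ fun r _ => Submodule.smul_mem _ _ ?_
        have h2 : T c r ∈ C (idx' r) := hc r
        exact hCle 0 (idx' r) (Nat.zero_le _) (hidx _).1 (by
          rw [hTapp] at h2; exact h2)
      · intro i h1i hit r hrs
        have hsm : shat i ≤ m := by have := hBshat i (by omega); omega
        have hrm : r < m := lt_of_lt_of_le hrs hsm
        have h2 := hc ⟨r, hrm⟩
        have h3 : i ≤ idx' ⟨r, hrm⟩ := by
          show i ≤ idx (Fin.rev ⟨r, hrm⟩)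
          rw [hidx_iff, Fin.val_rev]
          show B i ≤ m - (r + 1)
          have := hBshat i (by omega)
          omega
        have h4 : C (idx' ⟨r, hrm⟩) ≤ C i := hCle i _ h3 (hidx _).1
        exact h4 h2
    · rintro ⟨h0, hhi⟩ r
      rcases Nat.eq_zero_or_pos (idx' r) with h | h
      · rw [h]
        rw [hTapp]
        exact Submodule.sum_mem _ fun j _ => Submodule.smul_mem _ _ (h0 j)
      · have hit : idx' r ≤ t := (hidx _).1
        have hlt : (r : ℕ) < shat (idx' r) := by
          have h1 : B (idx' r) ≤ ((r.rev : Fin m) : ℕ) := (hidx r.rev).2.1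
          rw [hrev_val] at h1
          have h2 := hBshat (idx' r) (by omega)
          have h3 : (r : ℕ) < m := r.isLt
          omega
        exact hhi (idx' r) h hit (r : ℕ) hlt
  -- key injectivity: a codeword vanishing on the data positions is zero
  have hker : ∀ c ∈ 𝒞, (∀ (j : Fin m) (k : Fin n), (k : ℕ) < n - u (idx j) → c j k = 0) →
      c = 0 := by
    intro c hc hdata
    have main : ∀ i, i ≤ t + 1 → ∀ j : Fin m, (j : ℕ) < B i → c j = 0 := by
      intro i
      induction i with
      | zero =>
        intro _ j hj
        simp [hBdef] at hj
      | succ i ih =>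
        intro hi1 j hj
        by_cases hji : (j : ℕ) < B i
        · exact ih (by omega) j hji
        · have hit : i ≤ t := by omega
          have hBs := hBshat i (by omega)
          have hidxj : idx j = i := hidx_val j i (by omega) (by exact hj)
          -- all rows p with B i ≤ p lie in C i
          set e : Fin (shat i) → Fin m :=
            fun q => ⟨B i + (q : ℕ), by have := q.isLt; omega⟩ with hedef
          have hmem : ∀ q : Fin (shat i), c (e q) ∈ C i := by
            set M : Matrix (Fin (shat i)) (Fin (shat i)) F :=
              Matrix.of fun r q => α ^ ((r : ℕ) * (B i + (q : ℕ))) with hMdef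
            have hMdet : IsUnit M.det := hVdet (shat i) (B i) (by omega)
            apply aux_mem_of_sum_mem M hMdet (fun q : Fin (shat i) => c (e q)) (C i)
            intro r
            have hrlt := r.isLt
            have hrm : (r : ℕ) < m := by omega
            have hTr : T c ⟨(r : ℕ), hrm⟩ ∈ C i := by
              have h2 := (hmem𝒞 c).mp hc ⟨(r : ℕ), hrm⟩
              have h3 : i ≤ idx' ⟨(r : ℕ), hrm⟩ := by
                show i ≤ idx (Fin.rev ⟨(r : ℕ), hrm⟩)
                rw [hidx_iff, Fin.val_rev]
                show B i ≤ m - ((r : ℕ) + 1)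
                have := r.isLt
                omega
              exact hCle i _ h3 (hidx _).1 h2
            have heq : (∑ q : Fin (shat i), M r q • c (e q))
                = T c ⟨(r : ℕ), hrm⟩ := by
              rw [hTapp]
              -- define the natural-indexed summand
              set g : ℕ → (Fin n → F) := fun p =>
                if hp : p < m then α ^ ((r : ℕ) * p) • c ⟨p, hp⟩ else 0 with hgdef
              have hR : (∑ j : Fin m, (vmatAux m α) ⟨(r : ℕ), hrm⟩ j • c j)
                  = ∑ p ∈ Finset.range m, g p := by
                rw [Finset.sum_range fun p => g p]
                apply Finset.sum_congr rfl
                intro p _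
                simp only [hgdef]
                rw [dif_pos p.isLt]
                rfl
              have hL : (∑ q : Fin (shat i), M r q • c (e q))
                  = ∑ q ∈ Finset.range (shat i), g (B i + q) := by
                rw [Finset.sum_range fun q => g (B i + q)]
                apply Finset.sum_congr rfl
                intro q _
                simp only [hgdef]
                rw [dif_pos (by have := q.isLt; omega : B i + (q : ℕ) < m)]
                rfl
              rw [hL, hR]
              -- split the range-m sum
              have hsplit : (∑ p ∈ Finset.range m, g p)
                  = (∑ p ∈ Finset.range (B i), g p) + ∑ p ∈ Finset.Ico (B i) m, g p := by
                rw [Finset.range_eq_Ico]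
                rw [← Finset.sum_Ico_consecutive g (Nat.zero_le (B i)) (by omega : B i ≤ m)]
                rw [Finset.range_eq_Ico]
              have hzero : (∑ p ∈ Finset.range (B i), g p) = 0 := by
                apply Finset.sum_eq_zero
                intro p hp
                have hpBi : p < B i := Finset.mem_range.mp hp
                have hpm : p < m := by omega
                simp only [hgdef]
                rw [dif_pos hpm, ih (by omega) ⟨p, hpm⟩ hpBi, smul_zero]
              rw [hsplit, hzero, zero_add]
              rw [Finset.sum_Ico_eq_sum_range]
              have : m - B i = shat i := by omega
              rw [this]
            rw [heq]
            exact hTr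
          -- conclude c j = 0 from systematicity of C i
          obtain ⟨x, hx, hxu⟩ := hsys i hit 0
          have hcj : c j ∈ C i := by
            have hq : (j : ℕ) - B i < shat i := by have := j.isLt; omega
            have h5 := hmem ⟨(j : ℕ) - B i, hq⟩
            have h6 : e ⟨(j : ℕ) - B i, hq⟩ = j := Fin.ext (by
              show B i + ((j : ℕ) - B i) = (j : ℕ)
              omega)
            rwa [h6] at h5
          have h1 : c j = x := hxu (c j) ⟨hcj, fun k hk => by
            rw [hdata j k (by rw [hidxj]; exact hk)]; rfl⟩
          have h2 : (0 : Fin n → F) = x := hxu 0 ⟨(C i).zero_mem, fun _ _ => rfl⟩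
          rw [h1, ← h2]
    funext j
    have hjm : (j : ℕ) < B (t + 1) := by
      have := hBshat (t + 1) le_rfl
      have := hshat (t + 1)
      have hIcc : Finset.Icc (t + 1) t = ∅ := by
        rw [Finset.Icc_eq_empty_iff]
        omega
      rw [hIcc, Finset.sum_empty] at this
      have := j.isLt
      omega
    have := main (t + 1) le_rfl j hjm
    rw [this]
    rfl
  -- the data-extraction map
  set D : Type _ := ∀ j : Fin m, Fin (n - u (idx j)) → F with hDdef
  set ψ : ↥𝒞 → D := fun c j k =>
    (c : Fin m → Fin n → F) j ⟨(k : ℕ), lt_of_lt_of_le k.isLt (Nat.sub_le n _)⟩ with hψdef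
  have hψinj : Function.Injective ψ := by
    intro c c' hψeq
    have hsub : (c : Fin m → Fin n → F) - (c' : Fin m → Fin n → F) ∈ 𝒞 :=
      𝒞.sub_mem c.2 c'.2
    have hz : ∀ (j : Fin m) (k : Fin n), (k : ℕ) < n - u (idx j) →
        ((c : Fin m → Fin n → F) - (c' : Fin m → Fin n → F)) j k = 0 := by
      intro j k hk
      have h2 := congrFun (congrFun hψeq j) ⟨(k : ℕ), hk⟩
      simp only [hψdef] at h2
      have h3 : (⟨((⟨(k : ℕ), hk⟩ : Fin (n - u (idx j))) : ℕ),
          lt_of_lt_of_le (⟨(k : ℕ), hk⟩ : Fin (n - u (idx j))).isLt (Nat.sub_le n _)⟩ : Fin n)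
          = k := Fin.ext rfl
      rw [h3] at h2
      simp [h2]
    have h4 := hker _ hsub hz
    have h5 : (c : Fin m → Fin n → F) = (c' : Fin m → Fin n → F) := by
      have := sub_eq_zero.mp h4
      exact this
    exact Subtype.ext h5
  -- cardinality computation
  have hcard : Nat.card ↥𝒞 = Nat.card D := by
    have e1 : ↥𝒞 ≃ ∀ r : Fin m, ↥(C (idx' r)) :=
      { toFun := fun c r => ⟨T (c : Fin m → Fin n → F) r, (hmem𝒞 _).mp c.2 r⟩
        invFun := fun d => ⟨S (fun r => (d r : Fin n → F)), by
          rw [hmem𝒞]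
          intro r
          rw [hTS]
          exact (d r).2⟩
        left_inv := fun c => Subtype.ext (hST (c : Fin m → Fin n → F))
        right_inv := fun d => funext fun r => Subtype.ext
          (congrFun (hTS fun r' => (d r' : Fin n → F)) r) }
    rw [Nat.card_congr e1, Nat.card_pi, hDdef, Nat.card_pi]
    have hsubcard : ∀ i, i ≤ t → Nat.card ↥(C i) = Fintype.card F ^ (n - u i) := by
      intro i hi
      rw [← hfr i hi]
      have : Fintype ↥(C i) := Fintype.ofFinite _
      rw [Nat.card_eq_fintype_card]
      exact Module.card_eq_pow_finrank (K := F)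
    have hfun : ∀ j : Fin m, Nat.card (Fin (n - u (idx j)) → F)
        = Fintype.card F ^ (n - u (idx j)) := by
      intro j
      rw [Nat.card_fun, Nat.card_eq_fintype_card, Nat.card_eq_fintype_card,
        Fintype.card_fin]
    calc (∏ r : Fin m, Nat.card ↥(C (idx' r)))
        = ∏ r : Fin m, Fintype.card F ^ (n - u (idx' r)) := by
          apply Finset.prod_congr rfl
          intro r _
          exact hsubcard (idx' r) (hidx _).1
      _ = ∏ j : Fin m, Fintype.card F ^ (n - u (idx j)) := by
          exact Fintype.prod_bijective Fin.rev Fin.rev_bijective _ _ (fun r => rfl)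
      _ = ∏ j : Fin m, Nat.card (Fin (n - u (idx j)) → F) := by
          apply Finset.prod_congr rfl
          intro j _
          exact (hfun j).symm
  have hψbij : Function.Bijective ψ := by
    rw [Nat.bijective_iff_injective_and_card]
    exact ⟨hψinj, hcard⟩
  -- fiberwise counting
  have hfiber : ∀ g : ℕ → ℕ, (∑ j : Fin m, g (idx j)) = ∑ i ∈ Finset.range (t + 1), s i * g i := by
    intro g
    set g' : ℕ → ℕ := fun p => if hp : p < m then g (idx ⟨p, hp⟩) else 0 with hg'def
    have claim : ∀ i, i ≤ t + 1 →
        (∑ p ∈ Finset.range (B i), g' p) = ∑ k ∈ Finset.range i, s k * g k := by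
      intro i
      induction i with
      | zero => simp [hBdef]
      | succ i ih =>
        intro hi
        have hBle : B (i + 1) ≤ m := by
          have := hBshat (i + 1) hi
          omega
        rw [Finset.range_eq_Ico,
          ← Finset.sum_Ico_consecutive g' (Nat.zero_le (B i)) (hBmono (Nat.le_succ i)),
          ← Finset.range_eq_Ico, ih (by omega), Finset.sum_range_succ]
        congr 1
        have hconst : ∀ p ∈ Finset.Ico (B i) (B (i + 1)), g' p = g i := by
          intro p hp
          obtain ⟨hp1, hp2⟩ := Finset.mem_Ico.mp hp
          have hpm : p < m := by omega
          simp only [hg'def]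
          rw [dif_pos hpm]
          congr 1
          exact hidx_val ⟨p, hpm⟩ i hp1 hp2
        rw [Finset.sum_congr rfl hconst, Finset.sum_const, Nat.card_Ico, smul_eq_mul]
        congr 1
        rw [hBsucc i]
        omega
    have h1 : (∑ j : Fin m, g (idx j)) = ∑ p ∈ Finset.range m, g' p := by
      rw [Finset.sum_range fun p => g' p]
      apply Finset.sum_congr rfl
      intro j _
      simp only [hg'def]
      rw [dif_pos j.isLt]
    have h2 : B (t + 1) = m := by
      have := hBshat (t + 1) le_rfl
      have h3 := hshat (t + 1)
      have hIcc : Finset.Icc (t + 1) t = ∅ := by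
        rw [Finset.Icc_eq_empty_iff]; omega
      rw [hIcc, Finset.sum_empty] at h3
      omega
    rw [h1, ← h2, claim (t + 1) le_rfl]
  constructor
  · -- systematic encoding
    intro a
    obtain ⟨c, hcψ⟩ := hψbij.surjective
      (fun j k => a j ⟨(k : ℕ), lt_of_lt_of_le k.isLt (Nat.sub_le n _)⟩)
    refine ⟨(c : Fin m → Fin n → F), ⟨(hchar _).mp c.2, ?_⟩, ?_⟩
    · intro j k hk
      have h2 := congrFun (congrFun hcψ j) ⟨(k : ℕ), hk⟩
      simp only [hψdef] at h2
      have h3 : (⟨((⟨(k : ℕ), hk⟩ : Fin (n - u (idx j))) : ℕ),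
          lt_of_lt_of_le (⟨(k : ℕ), hk⟩ : Fin (n - u (idx j))).isLt (Nat.sub_le n _)⟩ : Fin n)
          = k := Fin.ext rfl
      rw [h3] at h2
      exact h2
    · rintro c' ⟨hP, hmatch⟩
      have hc' : c' ∈ 𝒞 := (hchar c').mpr hP
      have heq : ψ ⟨c', hc'⟩ = ψ c := by
        rw [hcψ]
        funext j k
        simp only [hψdef]
        exact hmatch j ⟨(k : ℕ), lt_of_lt_of_le k.isLt (Nat.sub_le n _)⟩ k.isLt
      exact congrArg Subtype.val (hψinj heq)
  · -- counting the data positions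
    rw [hfiber (fun i => n - u i)]
    have h1 : ∀ i ∈ Finset.range (t + 1), s i * (n - u i) + s i * u i = s i * n := by
      intro i hi
      have hi' : i ≤ t := by
        have := Finset.mem_range.mp hi; omega
      rw [← Nat.left_distrib]
      congr 1
      have := hut i hi'
      omega
    have h2 : (∑ i ∈ Finset.range (t + 1), s i * (n - u i))
        + ∑ i ∈ Finset.range (t + 1), s i * u i = m * n := by
      rw [← Finset.sum_add_distrib, Finset.sum_congr rfl h1, ← Finset.sum_mul, ← hm]
    omega
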